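/- Let (E,e₁,T) be a T-universally complete conditional Riesz triple and let e₂ ∈ E_+ be a weak order unit of E with T(e₂) = e₂. Then the maps Φ₁ : ba(C_{e₁},R(T)) → ba(C_{e₂},R(T)), μ ↦ (q ↦ μ(P_q(e₁))), and Φ₂ : ba(C_{e₂},R(T)) → ba(C_{e₁},R(T)), μ ↦ (p ↦ μ(P_p(e₂))), are well-defined, mutually inverse, R(T)-linear, isometric Riesz isomorphisms (isometric with respect to the norms μ ↦ |μ|(e₁) and μ ↦ |μ|(e₂)). -/

import Mathlib

open scoped Classical

noncomputable section

namespace RieszPaper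

universe u v w

/-! ### Basic Riesz space notions -/

section BasicDefs

variable {E : Type u} [Lattice E] [AddCommGroup E]

/-- The positive part `x ⊔ 0`. -/
def rpos (x : E) : E := x ⊔ 0

/-- The set of components of `e`, i.e. elements `p` with `p ⊓ (e - p) = 0`. -/
def Comp (e : E) : Set E := {p | p ⊓ (e - p) = 0}

/-- Disjoint complement of a set. -/
def disjC (S : Set E) : Set E := {x | ∀ y ∈ S, |x| ⊓ |y| = 0}

/-- The principal band generated by `f` (as double disjoint complement). -/
def pBand (f : E) : Set E := disjC (disjC {f})

/-- `e` is a weak order unit: `e > 0` and the band generated by `e` is all of `E`. -/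
def IsWeakUnit (e : E) : Prop := 0 < e ∧ ∀ x : E, 0 ≤ x → x ⊓ e = 0 → x = 0

/-- The chain `x ⊓ n•|f|`, whose supremum is the band projection of `x ≥ 0`
onto the band generated by `f`. -/
def projChain (f x : E) : Set E := {y | ∃ n : ℕ, y = x ⊓ n • |f|}

/-- Band projection of a positive element onto the band generated by `f`. -/
def projP (f x : E) : E := if h : ∃ s, IsLUB (projChain f x) s then h.choose else 0

/-- Band projection onto the principal band generated by `f`. -/
def proj (f x : E) : E := projP f (rpos x) - projP f (rpos (-x))

/-- The principal projection property. -/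
def HasPPP (α : Type u) [Lattice α] [AddCommGroup α] : Prop :=
  ∀ f x : α, 0 ≤ x → ∃ s, IsLUB (projChain f x) s

/-- A subset is sequentially order closed. -/
def SeqOrderClosed (D : Set E) : Prop :=
  (∀ (x : ℕ → E) (l : E), (∀ n, x n ∈ D) → Monotone x → IsLUB (Set.range x) l → l ∈ D) ∧
  (∀ (x : ℕ → E) (l : E), (∀ n, x n ∈ D) → Antitone x → IsGLB (Set.range x) l → l ∈ D)

end BasicDefs

/-! ### Charges on components -/

section Charges

variable {E : Type u} [Lattice E] [AddCommGroup E]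
variable {F : Type v} [Lattice F] [AddCommGroup F]

/-- `μ` is an `F`-valued signed charge on the components of `e`. -/
def IsChargeOn (e : E) (μ : E → F) : Prop :=
  μ 0 = 0 ∧ ∀ p q : E, p ∈ Comp e → q ∈ Comp e → p ⊓ q = 0 → μ (p + q) = μ p + μ q

/-- `μ` is order bounded on the components of `e`. -/
def OrdBddOn (e : E) (μ : E → F) : Prop :=
  ∃ g : F, 0 ≤ g ∧ ∀ p ∈ Comp e, |μ p| ≤ g

/-- `ba(C_e, F)`: order bounded signed `F`-valued charges on the components of `e`. -/
def baSet (e : E) : Set (E → F) := {μ | IsChargeOn e μ ∧ OrdBddOn e μ}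

/-- The order on charges: `μ ≤ ν` iff `ν - μ` is positive on components. -/
def baLe (e : E) (μ ν : E → F) : Prop := ∀ p ∈ Comp e, μ p ≤ ν p

/-- `η` is the least upper bound of `S ⊆ ba(C_e,F)` within `ba(C_e,F)`. -/
def IsLUBba (e : E) (S : Set (E → F)) (η : E → F) : Prop :=
  η ∈ baSet e ∧ (∀ μ ∈ S, baLe e μ η) ∧
    ∀ ξ ∈ baSet e, (∀ μ ∈ S, baLe e μ ξ) → baLe e η ξ

/-- `η` is the greatest lower bound of `S ⊆ ba(C_e,F)` within `ba(C_e,F)`. -/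
def IsGLBba (e : E) (S : Set (E → F)) (η : E → F) : Prop :=
  η ∈ baSet e ∧ (∀ μ ∈ S, baLe e η μ) ∧
    ∀ ξ ∈ baSet e, (∀ μ ∈ S, baLe e ξ μ) → baLe e ξ η

end Charges

section ChargesCCL

variable {E : Type u} [Lattice E] [AddCommGroup E]
variable {F : Type v} [ConditionallyCompleteLattice F] [AddCommGroup F]

/-- Pointwise formula for the supremum of two charges. -/
def chSupAt (e : E) (μ ν : E → F) (p : E) : F :=
  sSup {v | ∃ q, q ∈ Comp e ∧ q ≤ p ∧ v = μ q + ν (p - q)}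

/-- Pointwise formula for the infimum of two charges. -/
def chInfAt (e : E) (μ ν : E → F) (p : E) : F :=
  sInf {v | ∃ q, q ∈ Comp e ∧ q ≤ p ∧ v = μ q + ν (p - q)}

/-- The modulus of a charge, via the Riesz–Kantorovich-type formula. -/
def chargeAbs (e : E) (μ : E → F) : E → F :=
  fun p => sSup {v | ∃ q, q ∈ Comp e ∧ q ≤ p ∧ v = μ q - μ (p - q)}

/-- The positive part of a charge. -/
def chargePos (e : E) (μ : E → F) : E → F :=
  fun p => sSup {v | ∃ q, q ∈ Comp e ∧ q ≤ p ∧ v = μ q}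

/-- The negative part of a charge. -/
def chargeNeg (e : E) (μ : E → F) : E → F :=
  fun p => sSup {v | ∃ q, q ∈ Comp e ∧ q ≤ p ∧ v = -(μ q)}

end ChargesCCL

/-! ### Operators -/

section Ops

variable {E : Type u} [Lattice E] [AddCommGroup E] [Module ℝ E]

def PosOn (Lp : Set E) (φ : E → E) : Prop := ∀ f ∈ Lp, 0 ≤ f → 0 ≤ φ f

def AddOn (Lp : Set E) (φ : E → E) : Prop :=
  ∀ f g : E, f ∈ Lp → g ∈ Lp → φ (f + g) = φ f + φ g

def SmulOn (Lp : Set E) (φ : E → E) : Prop :=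
  ∀ (r : ℝ) (f : E), f ∈ Lp → φ (r • f) = r • φ f

/-- `φ` is a regular operator on `Lp`: a difference of two positive linear maps. -/
def RegularOn (Lp : Set E) (φ : E → E) : Prop :=
  ∃ ψ₁ ψ₂ : E → E, AddOn Lp ψ₁ ∧ AddOn Lp ψ₂ ∧ SmulOn Lp ψ₁ ∧ SmulOn Lp ψ₂ ∧
    PosOn Lp ψ₁ ∧ PosOn Lp ψ₂ ∧ ∀ f ∈ Lp, φ f = ψ₁ f - ψ₂ f

/-- Uniform convergence of a sequence with regulator `u`. -/
def UnifConv (u : E) (s : ℕ → E) (f : E) : Prop :=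
  ∃ ε : ℕ → ℝ, Antitone ε ∧ Filter.Tendsto ε Filter.atTop (nhds 0) ∧
    ∀ n, |f - s n| ≤ ε n • u

end Ops

/-! ### Conditional expectation operators -/

section CondExp

variable {E : Type u} [ConditionallyCompleteLattice E] [AddCommGroup E] [Module ℝ E]

/-- `(E, e, T)` is a conditional Riesz triple: `e` is a weak order unit and `T` is a
strictly positive conditional expectation operator with `T e = e` whose range is a
Dedekind complete Riesz subspace. -/
structure IsCondTriple (e : E) (T : E →ₗ[ℝ] E) : Prop where
  weakUnit : IsWeakUnit e
  pos : ∀ x : E, 0 ≤ x → 0 ≤ T x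
  strictPos : ∀ x : E, 0 < x → 0 < T x
  ordCont : ∀ (A : Set E) (s : E), A.Nonempty → DirectedOn (· ≤ ·) A →
    IsLUB A s → IsLUB (T '' A) (T s)
  idem : ∀ x : E, T (T x) = T x
  unitFix : T e = e
  rangeSupClosed : ∀ x y : E, x ∈ Set.range T → y ∈ Set.range T → x ⊔ y ∈ Set.range T
  rangeDedekind : ∀ A : Set E, A ⊆ Set.range T → A.Nonempty → BddAbove A →
    sSup A ∈ Set.range T

end CondExp

/-! ### Universal completion and T-universal completeness -/

section Univ

variable {E : Type u} {G : Type v}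
variable [ConditionallyCompleteLattice E] [AddCommGroup E] [Module ℝ E]
variable [ConditionallyCompleteLattice G] [AddCommGroup G] [Module ℝ G]

/-- `j : E → G` realizes `G` as a universal completion of `E`. -/
structure IsUnivCompletion (j : E →ₗ[ℝ] G) : Prop where
  bipos : ∀ x : E, 0 ≤ j x ↔ 0 ≤ x
  latHom : ∀ x y : E, j (x ⊔ y) = j x ⊔ j y
  dense : ∀ z : G, 0 < z → ∃ x : E, 0 < j x ∧ j x ≤ z
  univComplete : ∀ S : Set G, (∀ x ∈ S, 0 ≤ x) →
    S.Pairwise (fun a b => a ⊓ b = 0) → BddAbove S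

/-- `E` is `T`-universally complete (relative to the universal completion `j : E → G`):
every nonempty upwards directed subset `A ⊆ E` such that `j[T[A]]` is bounded above in
`G` has a supremum in `E`. -/
def TUnivComplete (T : E →ₗ[ℝ] E) (j : E →ₗ[ℝ] G) : Prop :=
  ∀ A : Set E, A.Nonempty → DirectedOn (· ≤ ·) A →
    BddAbove (⇑j '' (⇑T '' A)) → BddAbove A

end Univ

/-- `mul` is a commutative `f`-algebra multiplication with unit `u`. -/
structure IsFAlgebraMul {G : Type v} [Lattice G] [AddCommGroup G] [Module ℝ G]
    (u : G) (mul : G → G → G) : Prop where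
  comm : ∀ x y, mul x y = mul y x
  assoc : ∀ x y z, mul (mul x y) z = mul x (mul y z)
  add_left : ∀ x y z, mul (x + y) z = mul x z + mul y z
  smul_left : ∀ (r : ℝ) (x y), mul (r • x) y = r • mul x y
  one_mul : ∀ x, mul u x = x
  mul_nonneg : ∀ x y, 0 ≤ x → 0 ≤ y → 0 ≤ mul x y
  disj : ∀ x y z, x ⊓ y = 0 → 0 ≤ z → mul x z ⊓ y = 0

/-! ### Bundled T-universally complete conditional Riesz triples -/

/-- A `T`-universally complete conditional Riesz triple `(E, e, T)`, together with a
universal completion `j : E → G` carrying its `f`-algebra multiplication (with unit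
`j e`).  Since `E = L¹(T)` is an `R(T)`-module, products of elements of `L^∞(T)` with
elements of `E` again lie in `E` (`mulClosed`). -/
structure CRT (E : Type u) (G : Type v)
    [ConditionallyCompleteLattice E] [AddCommGroup E] [Module ℝ E]
    [CovariantClass E E (· + ·) (· ≤ ·)] [PosSMulMono ℝ E]
    [ConditionallyCompleteLattice G] [AddCommGroup G] [Module ℝ G]
    [CovariantClass G G (· + ·) (· ≤ ·)] [PosSMulMono ℝ G] where
  e : E
  T : E →ₗ[ℝ] E
  j : E →ₗ[ℝ] G
  mul : G → G → G
  triple : IsCondTriple e T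
  compl : IsUnivCompletion j
  falg : IsFAlgebraMul (j e) mul
  tuc : TUnivComplete T j
  mulClosed : ∀ f g : E, (∃ h : E, h ∈ Set.range T ∧ 0 ≤ h ∧ |f| ≤ h) →
    mul (j f) (j g) ∈ Set.range ⇑j

namespace CRT

variable {E : Type u} {G : Type v}
variable [ConditionallyCompleteLattice E] [AddCommGroup E] [Module ℝ E]
  [CovariantClass E E (· + ·) (· ≤ ·)] [PosSMulMono ℝ E]
variable [ConditionallyCompleteLattice G] [AddCommGroup G] [Module ℝ G]
  [CovariantClass G G (· + ·) (· ≤ ·)] [PosSMulMono ℝ G]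
variable (C : CRT E G)

/-- The range `R(T)`. -/
def R : Set E := Set.range ⇑C.T

/-- The product `g · f` of two elements of `E = L¹(T)`, computed in the universal
completion (meaningful whenever the product lies again in `E`, e.g. for
`g ∈ R(T)` or `g ∈ L^∞(T)`). -/
def sm (g f : E) : E := @Function.invFun E G ⟨0⟩ (⇑C.j) (C.mul (C.j g) (C.j f))

/-- `L^∞(T) = {f : |f| ≤ g for some g ∈ R(T)₊}`. -/
def Linf : Set E := {f | ∃ h ∈ C.R, 0 ≤ h ∧ |f| ≤ h}

/-- The `R(T)`-valued norm `‖f‖_{T,1} = T |f|`. -/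
def nrm1 (f : E) : E := C.T |f|

/-- The `R(T)`-valued norm `‖f‖_{T,∞} = inf {α ∈ R(T)₊ : |f| ≤ α}`. -/
def nrmInf (f : E) : E := sInf {a | a ∈ C.R ∧ 0 ≤ a ∧ |f| ≤ a}

/-- Order bounded signed `R(T)`-valued charges on the components of `u`. -/
def baR (u : E) : Set (E → E) :=
  {μ | IsChargeOn u μ ∧ (∀ p ∈ Comp u, μ p ∈ C.R) ∧
     ∃ g ∈ C.R, 0 ≤ g ∧ ∀ p ∈ Comp u, |μ p| ≤ g}

/-- `ba(T)`: the `T`-absolutely continuous charges in `ba(C_e, R(T))`. -/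
def baT : Set (E → E) :=
  {μ | μ ∈ C.baR C.e ∧ ∀ p ∈ Comp C.e, μ p ∈ pBand (C.T p)}

/-- `x = ∑ αᵢ pᵢ` is a standard representation of the `e`-step function `x` with
`R(T)`-coefficients. -/
def IsStdRep (x : E) (n : ℕ) (α p : Fin n → E) : Prop :=
  (∀ i, α i ∈ C.R) ∧ (∀ i, p i ∈ Comp C.e) ∧
  (∀ i j, i ≠ j → p i ⊓ p j = 0) ∧ (∑ i, p i) = C.e ∧
  x = ∑ i, C.sm (α i) (p i)

/-- `S_e(T)`: the `e`-step functions with `R(T)`-coefficients. -/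
def Steps : Set E := {x | ∃ (n : ℕ) (α p : Fin n → E), C.IsStdRep x n α p}

/-- The integral `I_μ` of a step function: `I_μ (∑ αᵢ pᵢ) = ∑ αᵢ μ(pᵢ)`. -/
def Imu (μ : E → E) (x : E) : E :=
  @Classical.epsilon E ⟨0⟩ fun v =>
    ∃ (n : ℕ) (α p : Fin n → E), C.IsStdRep x n α p ∧ v = ∑ i, C.sm (α i) (μ (p i))

/-- The integral of a positive element of `L^∞(T)` with respect to a positive charge. -/
def intPos (μ : E → E) (f : E) : E :=
  sSup {v | ∃ g ∈ C.Steps, 0 ≤ g ∧ g ≤ f ∧ v = C.Imu μ g}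

/-- The integral `∫ f dμ = ∫ f⁺ dμ⁺ − ∫ f⁻ dμ⁺ − ∫ f⁺ dμ⁻ + ∫ f⁻ dμ⁻`. -/
def integral (μ : E → E) (f : E) : E :=
  C.intPos (chargePos C.e μ) (rpos f) - C.intPos (chargePos C.e μ) (rpos (-f))
    - C.intPos (chargeNeg C.e μ) (rpos f) + C.intPos (chargeNeg C.e μ) (rpos (-f))

/-- Membership in `L^r(Lp, R(T))`: regular linear operators with values in `R(T)`. -/
structure MemLr (Lp : Set E) (φ : E → E) : Prop where
  add : AddOn Lp φ
  smul : SmulOn Lp φ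
  mem : ∀ f ∈ Lp, φ f ∈ C.R
  regular : RegularOn Lp φ

/-- Membership in the `T`-strong dual of `(Lp, nrm)`: `R(T)`-linear, regular,
`nrm`-bounded maps into `R(T)`. -/
structure MemDual (Lp : Set E) (nrm : E → E) (φ : E → E) : Prop where
  add : AddOn Lp φ
  smul : SmulOn Lp φ
  modHom : ∀ g f : E, g ∈ C.R → f ∈ Lp → φ (C.sm g f) = C.sm g (φ f)
  mem : ∀ f ∈ Lp, φ f ∈ C.R
  regular : RegularOn Lp φ
  bdd : ∃ k ∈ C.R, 0 ≤ k ∧ ∀ f ∈ Lp, |φ f| ≤ C.sm k (nrm f)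

/-- The `R(T)`-valued norm on the `T`-strong dual. -/
def dualNorm (Lp : Set E) (nrm : E → E) (φ : E → E) : E :=
  sInf {g | g ∈ C.R ∧ 0 ≤ g ∧ ∀ f ∈ Lp, |φ f| ≤ C.sm g (nrm f)}

/-- `|φ| ≤ |ψ|` in `L^r(Lp, R(T))`, via the Riesz–Kantorovich formula. -/
def OpAbsLe (Lp : Set E) (φ ψ : E → E) : Prop :=
  ∀ f ∈ Lp, 0 ≤ f → ∀ g ∈ Lp, |g| ≤ f →
    |φ g| ≤ sSup {v | ∃ h, h ∈ Lp ∧ |h| ≤ f ∧ v = |ψ h|}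

/-- The canonical partial inverse of `h` in `R(T)`: the element `g` of the band
generated by `|h|` with `h g = P_{|h|} e`. -/
def pinv (h : E) : E :=
  @Classical.epsilon E ⟨0⟩ fun g =>
    g ∈ C.R ∧ g ∈ pBand (|h|) ∧ C.sm h g = proj (|h|) C.e

end CRT

/-! ### Bundled Dedekind complete Riesz spaces, for existential statements -/

structure BRiesz : Type (u + 1) where
  carrier : Type u
  [ccl : ConditionallyCompleteLattice carrier]
  [grp : AddCommGroup carrier]
  [mod : Module ℝ carrier]
  [cov : CovariantClass carrier carrier (· + ·) (· ≤ ·)]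
  [psm : PosSMulMono ℝ carrier]

attribute [instance] BRiesz.ccl BRiesz.grp BRiesz.mod BRiesz.cov BRiesz.psm

/-- `(F, ẽ, T̃)` together with `i : E → F` is a `T`-universal completion of `(E, e, T)`. -/
structure IsTUnivCompletion
    {E : Type u} [ConditionallyCompleteLattice E] [AddCommGroup E] [Module ℝ E]
    {F : Type v} [ConditionallyCompleteLattice F] [AddCommGroup F] [Module ℝ F]
    (e : E) (T : E →ₗ[ℝ] E) (e' : F) (T' : F →ₗ[ℝ] F) (i : E →ₗ[ℝ] F) : Prop where
  triple : IsCondTriple e' T'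
  tuniv : ∃ (U : BRiesz.{v}) (j : F →ₗ[ℝ] U.carrier),
    IsUnivCompletion j ∧ TUnivComplete T' j
  bipos : ∀ x : E, 0 ≤ i x ↔ 0 ≤ x
  latHom : ∀ x y : E, i (x ⊔ y) = i x ⊔ i y
  dense : ∀ z : F, 0 < z → ∃ x : E, 0 < i x ∧ i x ≤ z
  unit : i e = e'
  comm : ∀ x : E, T' (i x) = i (T x)


/-! ### Powers via functional calculus, for the spaces `L^p(T)` -/

/-- A `T`-universally complete conditional Riesz triple together with the power
functions `x ↦ x^p` (`x ≥ 0`, `p > 0`) of the functional calculus on the universal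
completion. -/
structure CRTP (E : Type u) (G : Type v)
    [ConditionallyCompleteLattice E] [AddCommGroup E] [Module ℝ E]
    [CovariantClass E E (· + ·) (· ≤ ·)] [PosSMulMono ℝ E]
    [ConditionallyCompleteLattice G] [AddCommGroup G] [Module ℝ G]
    [CovariantClass G G (· + ·) (· ≤ ·)] [PosSMulMono ℝ G]
    extends CRT E G where
  epow : G → ℝ → G
  epow_one : ∀ x : G, 0 ≤ x → epow x 1 = x
  epow_nonneg : ∀ (x : G) (p : ℝ), 0 ≤ x → 0 < p → 0 ≤ epow x p
  epow_mono : ∀ (x y : G) (p : ℝ), 0 ≤ x → x ≤ y → 0 < p → epow x p ≤ epow y p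
  epow_unit : ∀ p : ℝ, 0 < p → epow (toCRT.j toCRT.e) p = toCRT.j toCRT.e
  epow_exp_mul : ∀ (x : G) (p q : ℝ), 0 ≤ x → 0 < p → 0 < q →
    epow (epow x p) q = epow x (p * q)
  epow_mul : ∀ (x y : G) (p : ℝ), 0 ≤ x → 0 ≤ y → 0 < p →
    epow (toCRT.mul x y) p = toCRT.mul (epow x p) (epow y p)
  epow_succ : ∀ (x : G) (n : ℕ), 0 ≤ x → 0 < n →
    epow x ((n : ℝ) + 1) = toCRT.mul (epow x (n : ℝ)) x
  epow_sup : ∀ (x y : G) (p : ℝ), 0 ≤ x → 0 ≤ y → 0 < p →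
    epow (x ⊔ y) p = epow x p ⊔ epow y p
  epow_rangeT : ∀ (x : E) (p : ℝ), 0 ≤ x → 0 < p → x ∈ Set.range ⇑toCRT.T →
    epow (toCRT.j x) p ∈ ⇑toCRT.j '' Set.range ⇑toCRT.T

namespace CRTP

variable {E : Type u} {G : Type v}
variable [ConditionallyCompleteLattice E] [AddCommGroup E] [Module ℝ E]
  [CovariantClass E E (· + ·) (· ≤ ·)] [PosSMulMono ℝ E]
variable [ConditionallyCompleteLattice G] [AddCommGroup G] [Module ℝ G]
  [CovariantClass G G (· + ·) (· ≤ ·)] [PosSMulMono ℝ G]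
variable (C : CRTP E G)

/-- the `p`-th power of `x ∈ E`, computed in the universal completion. -/
def powE (x : E) (p : ℝ) : E :=
  @Function.invFun E G ⟨0⟩ (⇑C.toCRT.j) (C.epow (C.toCRT.j x) p)

/-- `L^p(T) = {f ∈ L¹(T) : |f|^p ∈ L¹(T)}` for `p ∈ [1, ∞)`. -/
def LpSet (p : ℝ) : Set E := {f | C.epow (C.toCRT.j |f|) p ∈ Set.range ⇑C.toCRT.j}

/-- The `R(T)`-valued norm `‖f‖_{T,p} = (T |f|^p)^{1/p}`. -/
def nrmP (p : ℝ) (f : E) : E := C.powE (C.toCRT.T (C.powE |f| p)) (1 / p)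

end CRTP


/-! ### Auxiliary band projection lemmas -/

section Dev
variable {E : Type*} [ConditionallyCompleteLattice E] [AddCommGroup E]
  [CovariantClass E E (· + ·) (· ≤ ·)]

lemma inf_add_right' (a b c : E) : (a ⊓ b) + c = (a + c) ⊓ (b + c) := by
  apply le_antisymm
  · exact le_inf (add_le_add_left inf_le_left c) (add_le_add_left inf_le_right c)
  · have h : (a + c) ⊓ (b + c) - c ≤ a ⊓ b :=
      le_inf (by simpa using sub_le_sub_right (inf_le_left : (a+c)⊓(b+c) ≤ a + c) c)
        (by simpa using sub_le_sub_right (inf_le_right : (a+c)⊓(b+c) ≤ b + c) c)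
    exact sub_le_iff_le_add.mp h

lemma isLUB_add_const {A : Set E} {s : E} (h : IsLUB A s) (c : E) :
    IsLUB ((· + c) '' A) (s + c) := by
  constructor
  · rintro _ ⟨a, ha, rfl⟩; exact add_le_add_left (h.1 ha) c
  · intro b hb
    have hs : s ≤ b - c := h.2 fun a ha => le_sub_iff_add_le.mpr (hb ⟨a, ha, rfl⟩)
    exact add_le_of_le_sub_right hs

/-- Inf with a fixed element distributes over LUBs of nonempty sets. -/
lemma isLUB_inf_const {A : Set E} {s : E} (hA : A.Nonempty) (h : IsLUB A s) (x : E) :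
    IsLUB ((x ⊓ ·) '' A) (x ⊓ s) := by
  constructor
  · rintro _ ⟨a, ha, rfl⟩; exact inf_le_inf_left x (h.1 ha)
  · intro b hb
    have key : ∀ a ∈ A, a ≤ b + (s ⊔ x) - x := by
      intro a ha
      have h1 : a ⊓ x + (a ⊔ x) = a + x := inf_add_sup a x
      have h2 : a ⊓ x ≤ b := by
        have := hb ⟨a, ha, rfl⟩; simpa [inf_comm] using this
      have h3 : a ⊔ x ≤ s ⊔ x := sup_le_sup_right (h.1 ha) x
      have : a + x ≤ b + (s ⊔ x) := h1 ▸ add_le_add h2 h3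
      exact le_sub_iff_add_le.mpr this
    have hs : s ≤ b + (s ⊔ x) - x := h.2 key
    have : s + x ≤ b + (s ⊔ x) := le_sub_iff_add_le.mp hs
    have h4 : s ⊓ x + (s ⊔ x) = s + x := inf_add_sup s x
    have : s ⊓ x + (s ⊔ x) ≤ b + (s ⊔ x) := h4 ▸ this
    have := le_of_add_le_add_right this
    simpa [inf_comm] using this

/-- Subadditivity of inf for nonneg elements. -/
lemma inf_add_le (a b c : E) (ha : 0 ≤ a) (hb : 0 ≤ b) (hc : 0 ≤ c) :
    (a + b) ⊓ c ≤ a ⊓ c + b ⊓ c := by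
  have key : (a + b) ⊓ c - b ⊓ c ≤ a ⊓ c := by
    have e1 : (a + b) ⊓ c - b ⊓ c = (a + b - b ⊓ c) ⊓ (c - b ⊓ c) := by
      rw [sub_eq_add_neg, inf_add_right']; simp [sub_eq_add_neg]
    rw [e1]
    refine le_inf ?_ ?_
    · -- ≤ a
      have h2 : c - b ⊓ c ≤ a + (c - b ⊓ c) := le_add_of_nonneg_left ha
      have h3 : (a + b - b ⊓ c) ⊓ (c - b ⊓ c) ≤ (a + (b - b ⊓ c)) ⊓ (a + (c - b ⊓ c)) := by
        refine inf_le_inf ?_ h2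
        rw [add_sub_assoc]
      have h4 : (a + (b - b ⊓ c)) ⊓ (a + (c - b ⊓ c)) = a + ((b - b ⊓ c) ⊓ (c - b ⊓ c)) := by
        rw [add_comm a ((b - b ⊓ c) ⊓ (c - b ⊓ c)), inf_add_right', add_comm a, add_comm a]
      have h5 : (b - b ⊓ c) ⊓ (c - b ⊓ c) = 0 := by
        have : (b - b ⊓ c) ⊓ (c - b ⊓ c) = b ⊓ c - b ⊓ c := by
          rw [sub_eq_add_neg b, sub_eq_add_neg c, ← inf_add_right', sub_eq_add_neg]
        simpa using this
      calc (a + b - b ⊓ c) ⊓ (c - b ⊓ c) ≤ (a + (b - b ⊓ c)) ⊓ (a + (c - b ⊓ c)) := h3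
        _ = a + 0 := by rw [h4, h5]
        _ = a := add_zero a
    · exact le_trans inf_le_right (by simpa using sub_le_self c (le_inf hb hc))
  exact sub_le_iff_le_add.mp key

/-- disjointness is preserved by nsmul. -/
lemma nsmul_inf_eq_zero {a c : E} (ha : 0 ≤ a) (hc : 0 ≤ c) (h : a ⊓ c = 0) (n : ℕ) :
    (n • a) ⊓ c = 0 := by
  induction n with
  | zero => simpa using hc
  | succ n ih =>
    have h1 : (n • a + a) ⊓ c ≤ n • a ⊓ c + a ⊓ c := inf_add_le _ _ _ (nsmul_nonneg ha n) ha hc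
    rw [ih, h, add_zero] at h1
    have h2 : 0 ≤ (n • a + a) ⊓ c := le_inf (add_nonneg (nsmul_nonneg ha n) ha) hc
    rw [succ_nsmul]
    exact le_antisymm h1 h2

/-- Sum of disjoint elements below x is below x. -/
lemma disjoint_add_le {a b x : E} (hd : a ⊓ b = 0) (hax : a ≤ x) (hbx : b ≤ x) : a + b ≤ x := by
  have := inf_add_sup a b
  rw [hd, zero_add] at this
  rw [← this]; exact sup_le hax hbx

end Dev

section Proj
variable {E : Type*} [ConditionallyCompleteLattice E] [AddCommGroup E]
  [CovariantClass E E (· + ·) (· ≤ ·)]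

lemma projChain_nonempty (f x : E) : (projChain f x).Nonempty := ⟨x ⊓ (0:ℕ) • |f|, 0, rfl⟩

lemma projChain_bddAbove (f x : E) : BddAbove (projChain f x) :=
  ⟨x, by rintro y ⟨n, rfl⟩; exact inf_le_left⟩

lemma projP_isLUB (f x : E) : IsLUB (projChain f x) (projP f x) := by
  have h : ∃ s, IsLUB (projChain f x) s :=
    ⟨sSup _, isLUB_csSup (projChain_nonempty f x) (projChain_bddAbove f x)⟩
  rw [projP, dif_pos h]; exact h.choose_spec

lemma projP_le (f x : E) : projP f x ≤ x :=
  (projP_isLUB f x).2 (by rintro y ⟨n, rfl⟩; exact inf_le_left)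

lemma projP_nonneg (f : E) {x : E} (hx : 0 ≤ x) : 0 ≤ projP f x := by
  have h0 : (0 : E) ∈ projChain f x := ⟨0, by simp [inf_eq_right.mpr hx]⟩
  exact (projP_isLUB f x).1 h0

lemma projP_zero (f : E) : projP f (0 : E) = 0 := by
  refine ((projP_isLUB f 0).unique ?_)
  constructor
  · rintro y ⟨n, rfl⟩; exact inf_le_left
  · intro b hb; exact hb ⟨0, by simp⟩

lemma mem_projChain {f x : E} (hf : 0 ≤ f) (n : ℕ) : x ⊓ n • f ∈ projChain f x :=
  ⟨n, by rw [abs_of_nonneg hf]⟩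

lemma projChain_eq_range (f x : E) :
    projChain f x = Set.range (fun n : ℕ => x ⊓ n • |f|) := by
  ext y; exact ⟨fun ⟨n, h⟩ => ⟨n, h.symm⟩, fun ⟨n, h⟩ => ⟨n, h.symm⟩⟩

/-- `x ⊓ (projP f x + f) = projP f x` for `x, f ≥ 0`. -/
lemma inf_projP_add {f x : E} (hf : 0 ≤ f) (hx : 0 ≤ x) :
    x ⊓ (projP f x + f) = projP f x := by
  set s := projP f x with hs
  have h1 : IsLUB (projChain f x) s := projP_isLUB f x
  have h2 : IsLUB ((· + f) '' projChain f x) (s + f) := isLUB_add_const h1 f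
  have h3 : IsLUB ((x ⊓ ·) '' ((· + f) '' projChain f x)) (x ⊓ (s + f)) :=
    isLUB_inf_const ((projChain_nonempty f x).image _) h2 x
  refine le_antisymm (h3.2 ?_) (le_inf (projP_le f x) (le_add_of_nonneg_right hf))
  rintro _ ⟨_, ⟨y, ⟨n, rfl⟩, rfl⟩, rfl⟩
  show x ⊓ (x ⊓ n • |f| + f) ≤ s
  rw [abs_of_nonneg hf]
  have e1 : x ⊓ (x ⊓ n • f + f) = x ⊓ (n + 1) • f := by
    rw [inf_add_right' x (n • f) f, ← inf_assoc,
      inf_eq_left.mpr (le_add_of_nonneg_right hf : x ≤ x + f), succ_nsmul]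
  rw [e1]
  exact h1.1 (mem_projChain hf (n + 1))

lemma projP_residual {f x : E} (hf : 0 ≤ f) (hx : 0 ≤ x) :
    (x - projP f x) ⊓ f = 0 := by
  have h : (x - projP f x) ⊓ f + projP f x = x ⊓ (projP f x + f) := by
    rw [inf_add_right', sub_add_cancel, add_comm f]
  have h2 := inf_projP_add hf hx
  rw [h2] at h
  exact add_right_cancel (h.trans (zero_add (projP f x)).symm)

lemma disj_projP {a f x : E} (ha : 0 ≤ a) (hf : 0 ≤ f) (hx : 0 ≤ x)
    (h : a ⊓ f = 0) : a ⊓ projP f x = 0 := by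
  have h3 : IsLUB ((a ⊓ ·) '' projChain f x) (a ⊓ projP f x) :=
    isLUB_inf_const (projChain_nonempty f x) (projP_isLUB f x) a
  refine le_antisymm (h3.2 ?_) (le_inf ha (projP_nonneg f hx))
  rintro _ ⟨_, ⟨n, rfl⟩, rfl⟩
  show a ⊓ (x ⊓ n • |f|) ≤ 0
  have h1 : (n • f) ⊓ a = 0 := nsmul_inf_eq_zero hf ha (by rw [inf_comm]; exact h) n
  calc a ⊓ (x ⊓ n • |f|) ≤ a ⊓ n • |f| := inf_le_inf_left a inf_le_right
    _ = a ⊓ n • f := by rw [abs_of_nonneg hf]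
    _ = 0 := by rw [inf_comm]; exact h1

lemma isLUB_range_add {c d : ℕ → E} {s t : E} (hc : Monotone c) (hd : Monotone d)
    (hs : IsLUB (Set.range c) s) (ht : IsLUB (Set.range d) t) :
    IsLUB (Set.range fun n => c n + d n) (s + t) := by
  constructor
  · rintro _ ⟨n, rfl⟩; exact add_le_add (hs.1 ⟨n, rfl⟩) (ht.1 ⟨n, rfl⟩)
  · intro b hb
    have key : ∀ n m : ℕ, c n + d m ≤ b := by
      intro n m
      calc c n + d m ≤ c (max n m) + d (max n m) :=
            add_le_add (hc (le_max_left n m)) (hd (le_max_right n m))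
        _ ≤ b := hb ⟨max n m, rfl⟩
    have h1 : ∀ m, s ≤ b - d m := fun m =>
      hs.2 (by rintro _ ⟨n, rfl⟩; exact le_sub_iff_add_le.mpr (key n m))
    have h2 : t ≤ b - s := ht.2 (by
      rintro _ ⟨m, rfl⟩
      have := le_sub_iff_add_le.mp (h1 m)
      exact le_sub_iff_add_le.mpr (by rw [add_comm]; exact this))
    exact add_le_of_le_sub_left h2

lemma projP_add {q q' x : E} (hq : 0 ≤ q) (hq' : 0 ≤ q') (hd : q ⊓ q' = 0) (hx : 0 ≤ x) :
    projP (q + q') x = projP q x + projP q' x := by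
  have hmono : ∀ g : E, 0 ≤ g → Monotone (fun n : ℕ => x ⊓ n • g) := by
    intro g hg n m hnm
    exact inf_le_inf_left x (nsmul_le_nsmul_left hg hnm)
  have hpt : ∀ n : ℕ, x ⊓ n • (q + q') = x ⊓ n • q + x ⊓ n • q' := by
    intro n
    have hdn : (x ⊓ n • q) ⊓ (x ⊓ n • q') = 0 := by
      refine le_antisymm ?_ (le_inf (le_inf hx (nsmul_nonneg hq n)) (le_inf hx (nsmul_nonneg hq' n)))
      calc (x ⊓ n • q) ⊓ (x ⊓ n • q') ≤ (n • q) ⊓ (n • q') :=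
            inf_le_inf inf_le_right inf_le_right
        _ = 0 := by
            have h1 : (n • q) ⊓ q' = 0 := nsmul_inf_eq_zero hq hq' hd n
            have h2 : (n • q') ⊓ (n • q) = 0 :=
              nsmul_inf_eq_zero hq' (nsmul_nonneg hq n) (by rw [inf_comm]; exact h1) n
            rw [inf_comm]; exact h2
    refine le_antisymm ?_ ?_
    · rw [smul_add, inf_comm]
      calc (n • q + n • q') ⊓ x ≤ (n • q) ⊓ x + (n • q') ⊓ x :=
            inf_add_le _ _ _ (nsmul_nonneg hq n) (nsmul_nonneg hq' n) hx
        _ = x ⊓ n • q + x ⊓ n • q' := by rw [inf_comm (n • q) x, inf_comm (n • q') x]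
    · refine le_inf (disjoint_add_le hdn inf_le_left inf_le_left) ?_
      rw [smul_add]
      exact add_le_add inf_le_right inf_le_right
  have hr : ∀ g : E, 0 ≤ g → IsLUB (Set.range fun n : ℕ => x ⊓ n • g) (projP g x) := by
    intro g hg
    have := projP_isLUB g x
    rwa [projChain_eq_range, abs_of_nonneg hg] at this
  have hsum : IsLUB (Set.range fun n : ℕ => x ⊓ n • q + x ⊓ n • q')
      (projP q x + projP q' x) :=
    isLUB_range_add (hmono q hq) (hmono q' hq') (hr q hq) (hr q' hq')
  have hQ : IsLUB (Set.range fun n : ℕ => x ⊓ n • (q + q')) (projP q x + projP q' x) := by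
    have : (fun n : ℕ => x ⊓ n • (q + q')) = fun n : ℕ => x ⊓ n • q + x ⊓ n • q' :=
      funext hpt
    rw [this]; exact hsum
  exact (hr (q + q') (add_nonneg hq hq')).unique hQ

lemma projP_weakUnit {u x : E} (hu : IsWeakUnit u) (hx : 0 ≤ x) : projP u x = x := by
  have hd : (x - projP u x) ⊓ u = 0 := projP_residual hu.1.le hx
  have h0 : 0 ≤ x - projP u x := sub_nonneg.mpr (projP_le u x)
  have := hu.2 _ h0 hd
  have := sub_eq_zero.mp this
  exact this.symm

lemma comp_nonneg {e p : E} (hp : p ∈ Comp e) : 0 ≤ p := by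
  have : (0:E) ≤ p ⊓ (e - p) := le_of_eq hp.symm
  exact le_trans this inf_le_left

lemma comp_sub_nonneg {e p : E} (hp : p ∈ Comp e) : 0 ≤ e - p := by
  have : (0:E) ≤ p ⊓ (e - p) := le_of_eq hp.symm
  exact le_trans this inf_le_right

lemma comp_le {e p : E} (hp : p ∈ Comp e) : p ≤ e := sub_nonneg.mp (comp_sub_nonneg hp)

lemma comp_compl {e p : E} (hp : p ∈ Comp e) : e - p ∈ Comp e := by
  show (e - p) ⊓ (e - (e - p)) = 0
  rw [sub_sub_cancel, inf_comm]; exact hp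

/-- `projP q x` is a component of `x` for `q, x ≥ 0`. -/
lemma projP_mem_comp {q x : E} (hq : 0 ≤ q) (hx : 0 ≤ x) : projP q x ∈ Comp x := by
  show projP q x ⊓ (x - projP q x) = 0
  have h1 : (x - projP q x) ⊓ q = 0 := projP_residual hq hx
  have h2 : (x - projP q x) ⊓ projP q x = 0 :=
    disj_projP (sub_nonneg.mpr (projP_le q x)) hq hx h1
  rw [inf_comm]; exact h2

/-- Chains agree after adding a disjoint part. -/
lemma projP_add_disj {f a b : E} (hf : 0 ≤ f) (ha : 0 ≤ a) (hb : 0 ≤ b)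
    (hbf : b ⊓ f = 0) : projP f (a + b) = projP f a := by
  have hchain : projChain f (a + b) = projChain f a := by
    have hpt : ∀ n : ℕ, (a + b) ⊓ n • |f| = a ⊓ n • |f| := by
      intro n
      rw [abs_of_nonneg hf]
      refine le_antisymm ?_ (inf_le_inf_right _ (le_add_of_nonneg_right hb))
      have h1 : (b) ⊓ (n • f) = 0 := by
        have := nsmul_inf_eq_zero hf hb (by rw [inf_comm]; exact hbf) n
        rw [inf_comm]; exact this
      calc (a + b) ⊓ n • f ≤ a ⊓ n • f + b ⊓ n • f :=
            inf_add_le _ _ _ ha hb (nsmul_nonneg hf n)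
        _ = a ⊓ n • f := by rw [h1, add_zero]
    ext y
    constructor
    · rintro ⟨n, rfl⟩; exact ⟨n, (hpt n)⟩
    · rintro ⟨n, rfl⟩; exact ⟨n, (hpt n).symm⟩
  rw [projP, projP, hchain]

/-- A component equals the projection of `e` on itself. -/
lemma projP_comp_self {e p : E} (hp : p ∈ Comp e) : projP p e = p := by
  have hp0 := comp_nonneg hp
  have hep := comp_sub_nonneg hp
  refine (projP_isLUB p e).unique ?_
  constructor
  · rintro _ ⟨n, rfl⟩
    rw [abs_of_nonneg hp0]
    have h1 : (e - p) ⊓ n • p = 0 := by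
      have := nsmul_inf_eq_zero hp0 hep (show p ⊓ (e - p) = 0 from hp) n
      rw [inf_comm]; exact this
    have : e ⊓ n • p ≤ p ⊓ n • p + (e - p) ⊓ n • p := by
      have := inf_add_le p (e - p) (n • p) hp0 hep (nsmul_nonneg hp0 n)
      rwa [add_sub_cancel] at this
    rw [h1, add_zero] at this
    exact le_trans this inf_le_left
  · intro b hb
    have hmem : p ∈ projChain p e := by
      refine ⟨1, ?_⟩
      rw [abs_of_nonneg hp0, one_nsmul, inf_eq_right.mpr (comp_le hp)]
    exact hb hmem

/-- Main lemma: projecting back and forth between two weak units. -/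
lemma projP_projP {u v p : E} (hv : IsWeakUnit v) (hu0 : 0 ≤ u) (hp : p ∈ Comp u) :
    projP (projP p v) u = p := by
  have hv0 : (0:E) ≤ v := hv.1.le
  have hp0 := comp_nonneg hp
  set q := projP p v with hq
  have hq0 : 0 ≤ q := projP_nonneg p hv0
  -- Step 1 : projP q p = p
  have step1 : projP q p = p := by
    set t := projP q p with ht
    have ht0 : 0 ≤ t := projP_nonneg q hp0
    have htp : t ≤ p := projP_le q p
    have h1 : (p - t) ⊓ q = 0 := projP_residual hq0 hp0
    have h2 : (v - q) ⊓ p = 0 := projP_residual hp0 hv0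
    have h3 : (p - t) ⊓ (v - q) = 0 := by
      refine le_antisymm ?_ (le_inf (sub_nonneg.mpr htp) (sub_nonneg.mpr (projP_le p v)))
      calc (p - t) ⊓ (v - q) ≤ p ⊓ (v - q) := inf_le_inf_right _ (sub_le_self p ht0)
        _ = 0 := by rw [inf_comm]; exact h2
    have h4 : (p - t) ⊓ v = 0 := by
      have hv' : v = q + (v - q) := by abel
      refine le_antisymm ?_ (le_inf (sub_nonneg.mpr htp) hv0)
      calc (p - t) ⊓ v = v ⊓ (p - t) := by rw [inf_comm]
        _ = (q + (v - q)) ⊓ (p - t) := by rw [← hv']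
        _ ≤ q ⊓ (p - t) + (v - q) ⊓ (p - t) :=
            inf_add_le _ _ _ hq0 (sub_nonneg.mpr (projP_le p v)) (sub_nonneg.mpr htp)
        _ = 0 := by rw [inf_comm q, h1, inf_comm (v - q), h3, add_zero]
    have := hv.2 _ (sub_nonneg.mpr htp) h4
    have := sub_eq_zero.mp this
    exact this.symm
  -- Step 2 : decompose u = p + (u - p)
  have hup : (u - p) ⊓ q = 0 :=
    disj_projP (comp_sub_nonneg hp) hp0 hv0 (by rw [inf_comm]; exact hp)
  have : projP q (p + (u - p)) = projP q p := projP_add_disj hq0 hp0 (comp_sub_nonneg hp) hup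
  rw [add_sub_cancel] at this
  rw [this, step1]

lemma proj_eq_projP {f x : E} (hf : 0 ≤ f) (hx : 0 ≤ x) : proj f x = projP f x := by
  rw [proj, rpos, rpos, sup_eq_left.mpr hx, sup_eq_right.mpr (neg_nonpos.mpr hx),
    projP_zero, sub_zero]

lemma proj_zero' {x : E} (hx : 0 ≤ x) : proj (0:E) x = 0 := by
  rw [proj_eq_projP le_rfl hx]
  refine (projP_isLUB 0 x).unique ?_
  constructor
  · rintro _ ⟨n, rfl⟩
    simp [inf_eq_right.mpr hx]
  · intro b hb
    have := hb ⟨0, rfl⟩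
    simpa [inf_eq_right.mpr hx] using this

end Proj


/-! ### Transfer lemmas between weak order units -/

section Transfer
variable {E : Type*} [ConditionallyCompleteLattice E] [AddCommGroup E]
  [CovariantClass E E (· + ·) (· ≤ ·)]

lemma proj_comp {u q : E} (hu0 : 0 ≤ u) (hq0 : 0 ≤ q) : proj q u ∈ Comp u := by
  rw [proj_eq_projP hq0 hu0]; exact projP_mem_comp hq0 hu0

lemma proj_le' {u q : E} (hu0 : 0 ≤ u) (hq0 : 0 ≤ q) : proj q u ≤ u := by
  rw [proj_eq_projP hq0 hu0]; exact projP_le q u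

lemma proj_nonneg' {u q : E} (hu0 : 0 ≤ u) (hq0 : 0 ≤ q) : 0 ≤ proj q u := by
  rw [proj_eq_projP hq0 hu0]; exact projP_nonneg q hu0

lemma proj_proj' {u v p : E} (hv : IsWeakUnit v) (hu0 : 0 ≤ u) (hp : p ∈ Comp u) :
    proj (proj p v) u = p := by
  rw [proj_eq_projP (comp_nonneg hp) hv.1.le,
    proj_eq_projP (projP_nonneg _ hv.1.le) hu0]
  exact projP_projP hv hu0 hp

lemma proj_add' {u q q' : E} (hu0 : 0 ≤ u) (hq0 : 0 ≤ q) (hq'0 : 0 ≤ q')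
    (hd : q ⊓ q' = 0) : proj (q + q') u = proj q u + proj q' u := by
  rw [proj_eq_projP (add_nonneg hq0 hq'0) hu0, proj_eq_projP hq0 hu0,
    proj_eq_projP hq'0 hu0]
  exact projP_add hq0 hq'0 hd hu0

lemma proj_disj' {u q q' : E} (hu0 : 0 ≤ u) (hq0 : 0 ≤ q) (hq'0 : 0 ≤ q')
    (hd : q ⊓ q' = 0) : proj q u ⊓ proj q' u = 0 := by
  rw [proj_eq_projP hq0 hu0, proj_eq_projP hq'0 hu0]
  have h1 : projP q u ⊓ q' = 0 := by
    rw [inf_comm]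
    exact disj_projP hq'0 hq0 hu0 (by rw [inf_comm]; exact hd)
  exact disj_projP (projP_nonneg q hu0) hq'0 hu0 h1

lemma proj_compl' {u v q : E} (hv : IsWeakUnit v) (hu0 : 0 ≤ u) (hq : q ∈ Comp v) :
    proj (v - q) u = u - proj q u := by
  have hq0 := comp_nonneg hq
  have hvq0 := comp_sub_nonneg hq
  rw [proj_eq_projP hvq0 hu0, proj_eq_projP hq0 hu0]
  have hadd : projP (q + (v - q)) u = projP q u + projP (v - q) u :=
    projP_add hq0 hvq0 hq hu0
  rw [add_sub_cancel, projP_weakUnit hv hu0] at hadd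
  rw [eq_sub_iff_add_eq, add_comm, ← hadd]

lemma chargeAbs_transfer {u v : E} (hv : IsWeakUnit v) (hu0 : 0 ≤ u) (μ : E → E) :
    chargeAbs v (fun q => μ (proj q u)) v = chargeAbs u μ u := by
  unfold chargeAbs
  congr 1
  ext w
  constructor
  · rintro ⟨q, hqC, _, rfl⟩
    refine ⟨proj q u, proj_comp hu0 (comp_nonneg hqC), proj_le' hu0 (comp_nonneg hqC), ?_⟩
    show μ (proj q u) - μ (proj (v - q) u) = μ (proj q u) - μ (u - proj q u)
    rw [proj_compl' hv hu0 hqC]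
  · rintro ⟨p, hpC, _, rfl⟩
    refine ⟨proj p v, proj_comp hv.1.le (comp_nonneg hpC),
      proj_le' hv.1.le (comp_nonneg hpC), ?_⟩
    have hqC : proj p v ∈ Comp v := proj_comp hv.1.le (comp_nonneg hpC)
    show μ p - μ (u - p) = μ (proj (proj p v) u) - μ (proj (v - proj p v) u)
    rw [proj_compl' hv hu0 hqC, proj_proj' hv hu0 hpC]

end Transfer


/-- Let `(E,e₁,T)` be a `T`-universally complete conditional Riesz
triple and `e₂ ∈ E₊` another weak order unit with `T e₂ = e₂`.  Then
`Φ₁ : ba(C_{e₁},R(T)) → ba(C_{e₂},R(T)), μ ↦ (q ↦ μ(P_q e₁))` and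
`Φ₂ : ba(C_{e₂},R(T)) → ba(C_{e₁},R(T)), μ ↦ (p ↦ μ(P_p e₂))` are well-defined
mutually inverse `R(T)`-linear isometric Riesz isomorphisms. -/
theorem ba_independent_of_weak_unit {E : Type u} {G : Type v}
    [ConditionallyCompleteLattice E] [AddCommGroup E] [Module ℝ E]
    [CovariantClass E E (· + ·) (· ≤ ·)] [PosSMulMono ℝ E]
    [ConditionallyCompleteLattice G] [AddCommGroup G] [Module ℝ G]
    [CovariantClass G G (· + ·) (· ≤ ·)] [PosSMulMono ℝ G]
    (C : CRT E G) (e₂ : E) (h₂ : IsWeakUnit e₂) (hT₂ : C.T e₂ = e₂) :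
    -- well-definedness
    (∀ μ ∈ C.baR C.e, (fun q => μ (proj q C.e)) ∈ C.baR e₂) ∧
    (∀ μ ∈ C.baR e₂, (fun p => μ (proj p e₂)) ∈ C.baR C.e) ∧
    -- mutually inverse
    (∀ μ ∈ C.baR C.e, ∀ p ∈ Comp C.e, μ (proj (proj p e₂) C.e) = μ p) ∧
    (∀ μ ∈ C.baR e₂, ∀ q ∈ Comp e₂, μ (proj (proj q C.e) e₂) = μ q) ∧
    -- R(T)-linearity of Φ₁ (additivity and homogeneity are pointwise)
    (∀ μ ν : E → E, ∀ q : E,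
      (fun x => μ x + ν x) (proj q C.e) = μ (proj q C.e) + ν (proj q C.e)) ∧
    (∀ (μ : E → E) (g : E), ∀ q : E,
      (fun x => C.sm g (μ x)) (proj q C.e) = C.sm g (μ (proj q C.e))) ∧
    -- Φ₁ is an order (hence Riesz) isomorphism
    (∀ μ ∈ C.baR C.e, ∀ ν ∈ C.baR C.e,
      (baLe C.e μ ν ↔ baLe e₂ (fun q => μ (proj q C.e)) (fun q => ν (proj q C.e)))) ∧
    -- Φ₁ and Φ₂ are isometric
    (∀ μ ∈ C.baR C.e,
      chargeAbs e₂ (fun q => μ (proj q C.e)) e₂ = chargeAbs C.e μ C.e) ∧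
    (∀ μ ∈ C.baR e₂,
      chargeAbs C.e (fun p => μ (proj p e₂)) C.e = chargeAbs e₂ μ e₂) := by
  have he₁ : IsWeakUnit C.e := C.triple.weakUnit
  have hu0 : (0:E) ≤ C.e := he₁.1.le
  have hv0 : (0:E) ≤ e₂ := h₂.1.le
  have wd : ∀ (u v : E), 0 ≤ u → 0 ≤ v →
      ∀ μ ∈ C.baR u, (fun q => μ (proj q u)) ∈ C.baR v := by
    rintro u v hu0 hv0 μ ⟨⟨hμ0, hμadd⟩, hμR, g, hgR, hg0, hgb⟩
    refine ⟨⟨?_, ?_⟩, ?_, g, hgR, hg0, ?_⟩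
    · show μ (proj 0 u) = 0
      rw [proj_zero' hu0]; exact hμ0
    · intro p q hp hq hpq
      show μ (proj (p + q) u) = _
      rw [proj_add' hu0 (comp_nonneg hp) (comp_nonneg hq) hpq]
      exact hμadd _ _ (proj_comp hu0 (comp_nonneg hp)) (proj_comp hu0 (comp_nonneg hq))
        (proj_disj' hu0 (comp_nonneg hp) (comp_nonneg hq) hpq)
    · intro p hp; exact hμR _ (proj_comp hu0 (comp_nonneg hp))
    · intro p hp; exact hgb _ (proj_comp hu0 (comp_nonneg hp))
  refine ⟨fun μ hμ => wd C.e e₂ hu0 hv0 μ hμ, fun μ hμ => wd e₂ C.e hv0 hu0 μ hμ,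
    ?_, ?_, fun μ ν q => rfl, fun μ g q => rfl, ?_, ?_, ?_⟩
  · intro μ _ p hp
    rw [proj_proj' h₂ hu0 hp]
  · intro μ _ q hq
    rw [proj_proj' he₁ hv0 hq]
  · intro μ _ ν _
    constructor
    · intro h q hq
      exact h _ (proj_comp hu0 (comp_nonneg hq))
    · intro h p hp
      have h2 : μ (proj (proj p e₂) C.e) ≤ ν (proj (proj p e₂) C.e) :=
        h (proj p e₂) (proj_comp hv0 (comp_nonneg hp))
      rwa [proj_proj' h₂ hu0 hp] at h2
  · intro μ _; exact chargeAbs_transfer h₂ hu0 μ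
  · intro μ _; exact chargeAbs_transfer he₁ hv0 μ


end RieszPaper

end
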